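/- Let ψ : ℝⁿ → ℝⁿ be a C¹ diffeomorphism and π a permutation of {1, …, n}. Suppose that for every i ∈ {1, …, n} there exist continuously differentiable functions α_i : ℝ → ℝ and β_i : ℝ → ℝ with β_i'(t) ≠ 0 for every t ∈ ℝ, such that α_i(z_{π(i)}) = β_i(ψ_i(z)) for all z ∈ ℝⁿ. Then for every i there exists a function φ_i : ℝ → ℝ such that ψ_i(z) = φ_i(z_{π(i)}) for all z ∈ ℝⁿ; that is, ψ is the composition of the coordinate permutation z ↦ (z_{π(1)}, …, z_{π(n)}) with an elementwise map. -/
import Mathlib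

/-- **A diffeomorphism satisfying the intervention-ratio identities is a permutation
composed with an elementwise map (key step of Theorem 5.3).**
Let `ψ : ℝⁿ → ℝⁿ` be a `C¹` diffeomorphism and `π` a permutation of `{1,…,n}`. If for
every `i` there are continuously differentiable `α_i, β_i : ℝ → ℝ` with `β_i' ≠ 0`
everywhere such that `α_i(z_{π i}) = β_i(ψ_i(z))` for all `z`, then each `ψ_i` depends
only on `z_{π i}`: there are `φ_i : ℝ → ℝ` with `ψ_i(z) = φ_i(z_{π i})` for all `z`. -/
theorem perm_elementwise_of_ratio_identities
    {n : ℕ} (ψ ψinv : (Fin n → ℝ) → (Fin n → ℝ))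
    (hψC : ContDiff ℝ 1 ψ) (hψinvC : ContDiff ℝ 1 ψinv)
    (hψli : Function.LeftInverse ψinv ψ) (hψri : Function.RightInverse ψinv ψ)
    (π : Equiv.Perm (Fin n))
    (hratio : ∀ i : Fin n, ∃ α β : ℝ → ℝ,
      ContDiff ℝ 1 α ∧ ContDiff ℝ 1 β ∧ (∀ t, deriv β t ≠ 0) ∧
        ∀ z : Fin n → ℝ, α (z (π i)) = β (ψ z i)) :
    ∀ i : Fin n, ∃ φ : ℝ → ℝ, ∀ z : Fin n → ℝ, ψ z i = φ (z (π i)) := by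
  intro i
  obtain ⟨α, β, hα, hβ, hβ', hid⟩ := hratio i
  have hcont : Continuous (deriv β) := hβ.continuous_deriv le_rfl
  have hinj : Function.Injective β := by
    rcases lt_or_gt_of_ne (hβ' 0) with h | h
    · have hneg : ∀ t, deriv β t < 0 := by
        intro t
        by_contra hle
        push_neg at hle
        have hpos : 0 < deriv β t := lt_of_le_of_ne hle (Ne.symm (hβ' t))
        have hmem : (0 : ℝ) ∈ Set.uIcc (deriv β 0) (deriv β t) :=
          Set.mem_uIcc.2 (Or.inl ⟨h.le, hpos.le⟩)
        obtain ⟨c, _, hc⟩ := intermediate_value_uIcc hcont.continuousOn hmem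
        exact hβ' c hc
      exact (strictAnti_of_deriv_neg hneg).injective
    · have hpos : ∀ t, 0 < deriv β t := by
        intro t
        by_contra hle
        push_neg at hle
        have hneg : deriv β t < 0 := lt_of_le_of_ne hle (hβ' t)
        have hmem : (0 : ℝ) ∈ Set.uIcc (deriv β 0) (deriv β t) :=
          Set.mem_uIcc.2 (Or.inr ⟨hneg.le, h.le⟩)
        obtain ⟨c, _, hc⟩ := intermediate_value_uIcc hcont.continuousOn hmem
        exact hβ' c hc
      exact (strictMono_of_deriv_pos hpos).injective
  refine ⟨fun t => ψ (Function.update (fun _ => 0) (π i) t) i, fun z => ?_⟩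
  apply hinj
  rw [← hid, ← hid]
  simp
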